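/- Let G be a Cohen-Macaulay very well-covered graph with 2n vertices satisfying (∗) and (∗∗). For any set B of pairwise 3-disjoint edges of G, the set A = {i : x_i y_j ∈ B for some j} ∪ {i : x_i x_k ∈ B, i < k} is an antichain in 𝔡_G of size |B| and Ω_A contains no undirected edge of 𝔡_G. Consequently a(G) ≤ max{|A| : A antichain in 𝔡_G with Ω_A containing no undirected edge of 𝔡_G}. -/
import Mathlib


open Relation

/-- `C` is a vertex cover of `G`. -/
def IsVC {V : Type*} (G : SimpleGraph V) (C : Set V) : Prop :=
  ∀ ⦃u v : V⦄, G.Adj u v → u ∈ C ∨ v ∈ C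

/-- `C` is a minimal vertex cover of `G`. -/
def IsMinVC {V : Type*} (G : SimpleGraph V) (C : Set V) : Prop :=
  IsVC G C ∧ ∀ D : Set V, IsVC G D → D ⊆ C → D = C

/-- `S` is an independent set of `G`. -/
def IsIndep {V : Type*} (G : SimpleGraph V) (S : Set V) : Prop :=
  ∀ u ∈ S, ∀ v ∈ S, ¬ G.Adj u v

/-- `S` is a maximal independent set of `G`. -/
def IsMaxIndep {V : Type*} (G : SimpleGraph V) (S : Set V) : Prop :=
  IsIndep G S ∧ ∀ T : Set V, IsIndep G T → S ⊆ T → T = S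

/-- `G` has no isolated vertices. -/
def NoIsolated {V : Type*} (G : SimpleGraph V) : Prop := ∀ v, ∃ w, G.Adj v w

/-- The vertex set `{x_1,...,x_n} ∪ {y_1,...,y_n}`: `xv i = Sum.inl i`, `yv i = Sum.inr i`. -/
abbrev Vtx (n : ℕ) := Fin n ⊕ Fin n

def xv {n : ℕ} (i : Fin n) : Vtx n := Sum.inl i
def yv {n : ℕ} (i : Fin n) : Vtx n := Sum.inr i

/-- Condition (∗): X is a minimal vertex cover, Y is a maximal independent set,
and `x_i y_i` is an edge for every `i`. -/
def StarCond {n : ℕ} (G : SimpleGraph (Vtx n)) : Prop :=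
  IsMinVC G (Set.range xv) ∧ IsMaxIndep G (Set.range yv) ∧ ∀ i, G.Adj (xv i) (yv i)

/-- Condition (∗∗): `x_i y_j ∈ E(G)` implies `i ≤ j`. -/
def StarStarCond {n : ℕ} (G : SimpleGraph (Vtx n)) : Prop :=
  ∀ i j : Fin n, G.Adj (xv i) (yv j) → i ≤ j

/-- Condition (i): for distinct `i,j,k` and `z_i ∈ {x_i,y_i}`, if `z_i x_j` and `y_j x_k`
are edges then so is `z_i x_k`. -/
def CondI {n : ℕ} (G : SimpleGraph (Vtx n)) : Prop :=
  ∀ i j k : Fin n, i ≠ j → j ≠ k → i ≠ k →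
    ∀ z ∈ ({xv i, yv i} : Set (Vtx n)),
      G.Adj z (xv j) → G.Adj (yv j) (xv k) → G.Adj z (xv k)

/-- Condition (ii): `x_i y_j ∈ E(G)` implies `x_i x_j ∉ E(G)`. -/
def CondII {n : ℕ} (G : SimpleGraph (Vtx n)) : Prop :=
  ∀ i j : Fin n, G.Adj (xv i) (yv j) → ¬ G.Adj (xv i) (xv j)

/-- The minimum vertex cover size of `G` (the height of the edge ideal) is at least `n`. -/
def HeightN {n : ℕ} (G : SimpleGraph (Vtx n)) : Prop :=
  ∀ C : Finset (Vtx n), IsVC G ↑C → n ≤ C.card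

/-- Directed edge `i → j` of the semidirected graph `𝔡_G`. -/
def dirEdge {n : ℕ} (G : SimpleGraph (Vtx n)) (i j : Fin n) : Prop :=
  i ≠ j ∧ G.Adj (xv i) (yv j)

/-- Undirected edge `ij` of the semidirected graph `𝔡_G`. -/
def undirEdge {n : ℕ} (G : SimpleGraph (Vtx n)) (i j : Fin n) : Prop :=
  G.Adj (xv i) (xv j)
/-- The edges `ab` and `cd` of `G` are 3-disjoint: the induced subgraph on the four
(distinct) vertices consists of exactly the two disjoint edges. -/
def ThreeDisjoint {V : Type*} (G : SimpleGraph V) (a b c d : V) : Prop :=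
  G.Adj a b ∧ G.Adj c d ∧ a ≠ c ∧ a ≠ d ∧ b ≠ c ∧ b ≠ d ∧
    ¬ G.Adj a c ∧ ¬ G.Adj a d ∧ ¬ G.Adj b c ∧ ¬ G.Adj b d

/-- `B` is a set of pairwise 3-disjoint edges of `G`. -/
def Is3DisjointFamily {V : Type*} (G : SimpleGraph V) (B : Finset (V × V)) : Prop :=
  (∀ e ∈ B, G.Adj e.1 e.2) ∧
    ∀ e ∈ B, ∀ f ∈ B, e ≠ f → ThreeDisjoint G e.1 e.2 f.1 f.2

/-- `a(G)`: the maximum size of a set of pairwise 3-disjoint edges of `G`. -/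
noncomputable def aNum {V : Type*} (G : SimpleGraph V) : ℕ :=
  sSup {k | ∃ B : Finset (V × V), Is3DisjointFamily G B ∧ B.card = k}

/-- `Ω_A`: the set of indices reachable in `𝔡_G` by a directed path from `A` (or in `A`). -/
def Omega {n : ℕ} (G : SimpleGraph (Vtx n)) (A : Finset (Fin n)) : Set (Fin n) :=
  {j | ∃ i ∈ A, ReflTransGen (dirEdge G) i j}

/-- `A` is an antichain of `𝔡_G`: no directed path between distinct members. -/
def AntichainD {n : ℕ} (G : SimpleGraph (Vtx n)) (A : Finset (Fin n)) : Prop :=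
  ∀ i ∈ A, ∀ j ∈ A, i ≠ j → ¬ TransGen (dirEdge G) i j

/-- The index assigned to an edge of `G`: for `x_i y_j` the index `i`, for `x_i x_k` the
smaller of `i, k`. -/
def firstIdx {n : ℕ} : Vtx n × Vtx n → Fin n
  | (Sum.inl i, Sum.inl k) => min i k
  | (Sum.inl i, Sum.inr _) => i
  | (Sum.inr _, Sum.inl i) => i
  | (Sum.inr i, Sum.inr _) => i

section Aux

variable {n : ℕ} {G : SimpleGraph (Vtx n)}

lemma xv_inj {i j : Fin n} (h : xv i = xv j) : i = j := Sum.inl.inj h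

lemma yIndep (hstar : StarCond G) (i j : Fin n) : ¬ G.Adj (yv i) (yv j) :=
  hstar.2.1.1 _ ⟨i, rfl⟩ _ ⟨j, rfl⟩

lemma firstIdx_mem (hstar : StarCond G) {e : Vtx n × Vtx n} (he : G.Adj e.1 e.2) :
    xv (firstIdx e) = e.1 ∨ xv (firstIdx e) = e.2 := by
  obtain ⟨a | a, b | b⟩ := e
  · rcases le_total a b with h | h
    · left; simp [firstIdx, xv, min_eq_left h]
    · right; simp [firstIdx, xv, min_eq_right h]
  · left; rfl
  · right; rfl
  · exact absurd he (yIndep hstar a b)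

lemma dirEdge_lt (hss : StarStarCond G) {a b : Fin n} (h : dirEdge G a b) : a < b :=
  lt_of_le_of_ne (hss a b h.2) h.1

lemma dirEdge_trans (h1 : CondI G) (hss : StarStarCond G) {a b c : Fin n}
    (hab : dirEdge G a b) (hbc : dirEdge G b c) : dirEdge G a c := by
  have hac : a < c := (dirEdge_lt hss hab).trans (dirEdge_lt hss hbc)
  refine ⟨hac.ne, ?_⟩
  have := h1 c b a hbc.1.symm hab.1.symm hac.ne' (yv c) (by simp)
    hbc.2.symm hab.2.symm
  exact this.symm

lemma transGen_dirEdge (h1 : CondI G) (hss : StarStarCond G) {a b : Fin n}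
    (h : Relation.TransGen (dirEdge G) a b) : dirEdge G a b := by
  induction h with
  | single h => exact h
  | tail _ h ih => exact dirEdge_trans h1 hss ih h

lemma reflTransGen_dirEdge (h1 : CondI G) (hss : StarStarCond G) {a b : Fin n}
    (h : Relation.ReflTransGen (dirEdge G) a b) : a = b ∨ dirEdge G a b := by
  induction h with
  | refl => exact Or.inl rfl
  | tail _ h ih =>
    rcases ih with rfl | ih
    · exact Or.inr h
    · exact Or.inr (dirEdge_trans h1 hss ih h)

/-- From a directed reachability `a ⇝ i` and an undirected edge `x_i x_j`, get `x_a x_j`. -/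
lemma stepL (h1 : CondI G) (h2 : CondII G) {a i j : Fin n}
    (ha : a = i ∨ dirEdge G a i) (hij : G.Adj (xv i) (xv j)) :
    G.Adj (xv a) (xv j) := by
  rcases ha with rfl | ha
  · exact hij
  have hji : j ≠ i := fun h => G.irrefl (h ▸ hij)
  by_cases haj : a = j
  · subst haj
    exact absurd hij.symm (h2 a i ha.2)
  · have := h1 j i a hji ha.1.symm (Ne.symm haj) (xv j) (by simp)
      hij.symm ha.2.symm
    exact this.symm

end Aux

lemma main_parts {n : ℕ} (G : SimpleGraph (Vtx n)) (hstar : StarCond G)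
    (hss : StarStarCond G) (h1 : CondI G) (h2 : CondII G)
    (B : Finset (Vtx n × Vtx n)) (hB : Is3DisjointFamily G B) :
    (B.image firstIdx).card = B.card ∧ AntichainD G (B.image firstIdx) ∧
    (∀ i ∈ Omega G (B.image firstIdx), ∀ j ∈ Omega G (B.image firstIdx),
      ¬ undirEdge G i j) := by
  have cross : ∀ e ∈ B, ∀ f ∈ B, e ≠ f → ∀ u v : Vtx n,
      (u = e.1 ∨ u = e.2) → (v = f.1 ∨ v = f.2) → u ≠ v ∧ ¬ G.Adj u v := by
    intro e he f hf hef u v hu hv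
    obtain ⟨-, -, h13, h14, h23, h24, n13, n14, n23, n24⟩ := hB.2 e he f hf hef
    rcases hu with rfl | rfl <;> rcases hv with rfl | rfl <;>
      exact ⟨by assumption, by assumption⟩
  have hinj : Set.InjOn firstIdx (B : Set (Vtx n × Vtx n)) := by
    intro e he f hf hef
    by_contra hne
    exact (cross e he f hf hne (xv (firstIdx e)) (xv (firstIdx f))
      (firstIdx_mem hstar (hB.1 e he)) (firstIdx_mem hstar (hB.1 f hf))).1
      (congrArg xv hef)
  have anti : AntichainD G (B.image firstIdx) := by
    intro i hi j hj hij htg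
    have hd : dirEdge G i j := transGen_dirEdge h1 hss htg
    obtain ⟨e, he, hie⟩ := Finset.mem_image.1 hi
    obtain ⟨f, hf, hjf⟩ := Finset.mem_image.1 hj
    have hef : e ≠ f := fun h => hij (hie ▸ hjf ▸ h ▸ rfl)
    have hxi : xv i = e.1 ∨ xv i = e.2 := hie ▸ firstIdx_mem hstar (hB.1 e he)
    have hadjf : G.Adj f.1 f.2 := hB.1 f hf
    -- common argument for "f is an x-x edge with endpoints b (=j) and k"
    have xxcase : ∀ b k : Fin n, j = b → G.Adj (xv b) (xv k) →
        (xv k = f.1 ∨ xv k = f.2) → False := by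
      intro b k hjb hbk hkf
      subst hjb
      have hki : k ≠ i := fun h =>
        (cross e he f hf hef (xv i) (xv k) hxi hkf).1 (by rw [h])
      have hkj : k ≠ j := fun h => G.irrefl (h ▸ hbk)
      have : G.Adj (xv k) (xv i) :=
        h1 k j i hkj hd.1.symm hki (xv k) (by simp) hbk.symm hd.2.symm
      exact (cross e he f hf hef (xv i) (xv k) hxi hkf).2 this.symm
    -- common argument for "f is an x-y edge x_b y_d with b = j"
    have xycase : ∀ b d : Fin n, j = b → G.Adj (xv b) (yv d) →
        (yv d = f.1 ∨ yv d = f.2) → False := by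
      intro b d hjb hbd hdf
      subst hjb
      have hyd : G.Adj (xv i) (yv d) := by
        by_cases hjd : j = d
        · exact hjd ▸ hd.2
        · exact (dirEdge_trans h1 hss hd ⟨hjd, hbd⟩).2
      exact (cross e he f hf hef (xv i) (yv d) hxi hdf).2 hyd
    obtain ⟨c | c, d | d⟩ := f
    · -- x_c x_d edge, j = min c d
      rcases le_total c d with h | h
      · exact xxcase c d (by rw [← hjf]; simp [firstIdx, min_eq_left h]) hadjf (Or.inr rfl)
      · exact xxcase d c (by rw [← hjf]; simp [firstIdx, min_eq_right h]) hadjf.symm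
          (Or.inl rfl)
    · exact xycase c d (by rw [← hjf]; rfl) hadjf (Or.inr rfl)
    · exact xycase d c (by rw [← hjf]; rfl) hadjf.symm (Or.inl rfl)
    · exact yIndep hstar c d hadjf
  refine ⟨Finset.card_image_of_injOn hinj, anti, ?_⟩
  intro i hi j hj hadj
  obtain ⟨a, ha, hai⟩ := hi
  obtain ⟨b, hb, hbj⟩ := hj
  have haj : G.Adj (xv a) (xv j) :=
    stepL h1 h2 (reflTransGen_dirEdge h1 hss hai) hadj
  have hba : G.Adj (xv b) (xv a) :=
    stepL h1 h2 (reflTransGen_dirEdge h1 hss hbj) haj.symm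
  obtain ⟨e, he, hea⟩ := Finset.mem_image.1 ha
  obtain ⟨f, hf, hfb⟩ := Finset.mem_image.1 hb
  by_cases hef : e = f
  · exact G.irrefl (by rw [show b = a from hfb ▸ hea ▸ hef ▸ rfl] at hba; exact hba)
  · exact (cross e he f hf hef (xv a) (xv b)
      (hea ▸ firstIdx_mem hstar (hB.1 e he))
      (hfb ▸ firstIdx_mem hstar (hB.1 f hf))).2 hba.symm


/-- last part of Theorem 4.10. Let `G` be a Cohen-Macaulay very
well-covered graph with `2n` vertices satisfying (∗) and (∗∗). For any set `B` of pairwise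
3-disjoint edges of `G`, the index set `A = {i : x_i y_j ∈ B} ∪ {i : x_i x_k ∈ B, i < k}`
is an antichain of `𝔡_G` of size `|B|` and `Ω_A` contains no undirected edge of `𝔡_G`.
Consequently `a(G) ≤ max{|A| : A antichain, Ω_A without undirected edges}`. -/
theorem threeDisjoint_gives_antichain {n : ℕ} (G : SimpleGraph (Vtx n))
    (hiso : NoIsolated G) (hht : HeightN G) (hstar : StarCond G)
    (hss : StarStarCond G) (h1 : CondI G) (h2 : CondII G)
    (B : Finset (Vtx n × Vtx n)) (hB : Is3DisjointFamily G B) :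
    (B.image firstIdx).card = B.card ∧
    AntichainD G (B.image firstIdx) ∧
    (∀ i ∈ Omega G (B.image firstIdx), ∀ j ∈ Omega G (B.image firstIdx),
      ¬ undirEdge G i j) ∧
    aNum G ≤ sSup {k | ∃ A : Finset (Fin n), AntichainD G A ∧
      (∀ i ∈ Omega G A, ∀ j ∈ Omega G A, ¬ undirEdge G i j) ∧ A.card = k} := by
  obtain ⟨hc, ha, ho⟩ := main_parts G hstar hss h1 h2 B hB
  refine ⟨hc, ha, ho, ?_⟩
  apply csSup_le_csSup
  · exact ⟨n, fun k hk => by obtain ⟨A, -, -, rfl⟩ := hk; simpa using A.card_le_univ⟩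
  · exact ⟨0, ∅, ⟨fun e he => absurd he (Finset.notMem_empty e),
      fun e he => absurd he (Finset.notMem_empty e)⟩, Finset.card_empty⟩
  · rintro k ⟨B', hB', rfl⟩
    obtain ⟨hc', ha', ho'⟩ := main_parts G hstar hss h1 h2 B' hB'
    exact ⟨B'.image firstIdx, ha', ho', hc'⟩
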